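/- Let ρ be a preorder (reflexive and transitive relation) on a set X such that X has a cross-cut of length one or two. Then there is a subset σ of ρ such that σ is a G-grading set for ρ for every group G. -/

import Mathlib

open scoped Classical

universe u v

/-- The interval `[x,y] = {z | x ρ z and z ρ y}` determined by a relation `ρ`. -/
def RelInterval {X : Type*} (ρ : X → X → Prop) (x y : X) : Set X :=
  {z | ρ x z ∧ ρ z y}

/-- A relation is locally finite if every interval is finite. -/
def RelLocallyFinite {X : Type*} (ρ : X → X → Prop) : Prop :=
  ∀ x y, (RelInterval ρ x y).Finite

/-- A relation is balanced if it is reflexive and whenever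
`w ρ x`, `x ρ y`, `y ρ z`, `w ρ z` all hold, `w ρ y ↔ x ρ z`. -/
def RelBalanced {X : Type*} (ρ : X → X → Prop) : Prop :=
  (∀ x, ρ x x) ∧
  ∀ w x y z, ρ w x → ρ x y → ρ y z → ρ w z → (ρ w y ↔ ρ x z)

/-- The underlying set of the generalized incidence ring `I(X,ρ,R)`:
functions `f : X → X → R` with `f x y ≠ 0 → x ρ y`. -/
def IncFun {X : Type*} (ρ : X → X → Prop) (R : Type*) [Ring R] :
    Set (X → X → R) :=
  {f | ∀ x y, f x y ≠ 0 → ρ x y}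

/-- The convolution product on `I(X,ρ,R)`. -/
noncomputable def conv {X R : Type*} [Ring R] (ρ : X → X → Prop)
    (f g : X → X → R) : X → X → R :=
  fun x y => if ρ x y then ∑ᶠ z ∈ RelInterval ρ x y, f x z * g z y else 0

/-- The function `e` with `e x x = 1` and `e x y = 0` for `x ≠ y`. -/
noncomputable def eId (X R : Type*) [Ring R] : X → X → R :=
  fun x y => if x = y then 1 else 0

/-- The matrix unit `e_{xy}`: value `1` at `(x,y)` and `0` elsewhere. -/
noncomputable def eUnit {X : Type*} (R : Type*) [Ring R] (x y : X) : X → X → R :=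
  fun i j => if i = x ∧ j = y then 1 else 0

/-- A homomorphism `Φ : ρ → G`: `Φ x y * Φ y z = Φ x z` on transitive triples. -/
def IsRelHom {X G : Type*} [Mul G] (ρ : X → X → Prop) (Φ : X → X → G) : Prop :=
  ∀ x y z, ρ x y → ρ y z → ρ x z → Φ x y * Φ y z = Φ x z

/-- The homogeneous component `S_a` induced by `Φ`. -/
def gradeSet {X G : Type*} (R : Type*) [Ring R] (ρ : X → X → Prop)
    (Φ : X → X → G) (a : G) : Set (X → X → R) :=
  {f | (∀ x y, f x y ≠ 0 → ρ x y) ∧ ∀ x y, f x y ≠ 0 → Φ x y = a}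

/-- The image `{Φ x y : x ρ y}` of a homomorphism `Φ : ρ → G`. -/
def RelImage {X G : Type*} (ρ : X → X → Prop) (Φ : X → X → G) : Set G :=
  {a | ∃ x y, ρ x y ∧ Φ x y = a}

/-- `θ : X₂ → X₁` is a compression map from `(X₂,ρ₂)` onto `(X₁,ρ₁)`. -/
structure IsCompression {X₁ X₂ : Type*} (ρ₁ : X₁ → X₁ → Prop)
    (ρ₂ : X₂ → X₂ → Prop) (θ : X₂ → X₁) : Prop where
  surj : Function.Surjective θ
  mono : ∀ x y, ρ₂ x y → ρ₁ (θ x) (θ y)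
  lift : ∀ a₁ a₂ a₃, ρ₁ a₁ a₂ → ρ₁ a₂ a₃ → ρ₁ a₁ a₃ →
    ∃ x₁ x₂ x₃, ρ₂ x₁ x₂ ∧ ρ₂ x₂ x₃ ∧ ρ₂ x₁ x₃ ∧
      θ x₁ = a₁ ∧ θ x₂ = a₂ ∧ θ x₃ = a₃
  bij : Set.BijOn (fun p : X₂ × X₂ => (θ p.1, θ p.2))
    {p | ρ₂ p.1 p.2 ∧ p.1 ≠ p.2} {q | ρ₁ q.1 q.2 ∧ q.1 ≠ q.2}

/-- `σ ⊆ ρ` is a `G`-grading set for `ρ`: every function `φ : σ → G`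
extends to a homomorphism `Φ : ρ → G` which is unique on `ρ`. -/
def IsGradingSet (G : Type*) [Mul G] {X : Type*} (ρ : X → X → Prop)
    (σ : Set (X × X)) : Prop :=
  (∀ p ∈ σ, ρ p.1 p.2) ∧
  ∀ φ : X × X → G, ∃ Φ : X → X → G,
    IsRelHom ρ Φ ∧ (∀ p ∈ σ, Φ p.1 p.2 = φ p) ∧
    ∀ Ψ : X → X → G, IsRelHom ρ Ψ → (∀ p ∈ σ, Ψ p.1 p.2 = φ p) →
      ∀ x y, ρ x y → Ψ x y = Φ x y

/-- The map `h : I(X₁,ρ₁,R) → I(X₂,ρ₂,R)` induced by a compression `θ : X₂ → X₁`. -/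
noncomputable def compressMap {X₁ X₂ : Type*} (R : Type*) [Ring R]
    (ρ₂ : X₂ → X₂ → Prop) (θ : X₂ → X₁) (f : X₁ → X₁ → R) : X₂ → X₂ → R :=
  fun x y => if ρ₂ x y then f (θ x) (θ y) else 0

/-- A transitive triple: `a ρ b`, `b ρ c`, `a ρ c`. -/
def TransTriple {X : Type*} (ρ : X → X → Prop) (a b c : X) : Prop :=
  ρ a b ∧ ρ b c ∧ ρ a c

/-- A stable relation: balanced, and for all pairwise distinct `a,b,c,d`,
`a ρ b`, `a ρ c`, `b ρ c`, `b ρ d`, `c ρ d` imply `a ρ d`. -/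
def RelStable {X : Type*} (ρ : X → X → Prop) : Prop :=
  RelBalanced ρ ∧
  ∀ a b c d : X, a ≠ b → a ≠ c → a ≠ d → b ≠ c → b ≠ d → c ≠ d →
    ρ a b → ρ a c → ρ b c → ρ b d → ρ c d → ρ a d

/-- `x` is a clasp. -/
def IsClasp {X : Type*} (ρ : X → X → Prop) (x : X) : Prop :=
  ∃ w y, w ≠ x ∧ y ≠ x ∧ ρ w x ∧ ρ x y ∧ ¬ ρ w y

/-- `x` is a locked clasp. -/
def IsLockedClasp {X : Type*} (ρ : X → X → Prop) (x : X) : Prop :=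
  ∃ u v w y : X, u ≠ x ∧ v ≠ x ∧ w ≠ x ∧ y ≠ x ∧ ¬ ρ w y ∧
    TransTriple ρ u x y ∧ TransTriple ρ u x v ∧ TransTriple ρ w x v

/-- `A` is a cross-cut for the (pre)order `ρ` on `X`. -/
def IsCrossCut {X : Type*} (ρ : X → X → Prop) (A : Set X) : Prop :=
  (∀ a ∈ A, ∀ b ∈ A, a ≠ b → ¬ ρ a b ∧ ¬ ρ b a) ∧
  (∀ x : X, ∃ a ∈ A, ρ x a ∨ ρ a x) ∧
  (∀ C : Set X, IsChain ρ C → ∃ C', C ⊆ C' ∧ IsChain ρ C' ∧ (A ∩ C').Nonempty)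

section CrossCutAux

variable {X : Type v} {G : Type u}

private lemma grp_aux [Group G] {p q r s : G} (h : p * q⁻¹ = r * s⁻¹) :
    p⁻¹ * r = q⁻¹ * s := by
  have h2 : p = r * s⁻¹ * q := by rw [← h]; group
  rw [h2]; group

lemma relHom_diag [Group G] {ρ : X → X → Prop} {Φ : X → X → G}
    (hΦ : IsRelHom ρ Φ) {x : X} (hx : ρ x x) : Φ x x = 1 :=
  mul_eq_right.mp (hΦ x x x hx hx hx)

lemma relHom_inv [Group G] {ρ : X → X → Prop} {Φ : X → X → G}
    (hΦ : IsRelHom ρ Φ) {x y : X} (hx : ρ x x) (hxy : ρ x y) (hyx : ρ y x) :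
    Φ y x = (Φ x y)⁻¹ := by
  have h := hΦ x y x hxy hyx hx
  rw [relHom_diag hΦ hx] at h
  exact (inv_eq_of_mul_eq_one_right h).symm

lemma relHom_pot [Group G] {ρ : X → X → Prop}
    (hrefl : ∀ x, ρ x x) (htrans : ∀ x y z, ρ x y → ρ y z → ρ x z)
    {Ψ : X → X → G} (hΨ : IsRelHom ρ Ψ) (c : X) {x y : X}
    (hx : ρ x c ∨ ρ c x) (hy : ρ y c ∨ ρ c y) (hxy : ρ x y) :
    Ψ x y = (if ρ x c then Ψ x c else (Ψ c x)⁻¹) *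
      (if ρ y c then Ψ y c else (Ψ c y)⁻¹)⁻¹ := by
  by_cases hxc : ρ x c
  · by_cases hyc : ρ y c
    · rw [if_pos hxc, if_pos hyc]
      have h := hΨ x y c hxy hyc (htrans _ _ _ hxy hyc)
      rw [← h]; group
    · rw [if_pos hxc, if_neg hyc]
      have hcy : ρ c y := hy.resolve_left hyc
      have h := hΨ x c y hxc hcy hxy
      rw [← h]; group
  · have hcx : ρ c x := hx.resolve_left hxc
    have hcy : ρ c y := htrans _ _ _ hcx hxy
    have h := hΨ c x y hcx hxy hcy
    have h2 : Ψ x y = (Ψ c x)⁻¹ * Ψ c y := by rw [← h]; group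
    rw [if_neg hxc]
    by_cases hyc : ρ y c
    · rw [if_pos hyc, h2, relHom_inv hΨ (hrefl y) hyc hcy]
    · rw [if_neg hyc, h2, inv_inv]

end CrossCutAux

lemma crosscut_case_one {X : Type v} (ρ : X → X → Prop)
    (hrefl : ∀ x, ρ x x) (htrans : ∀ x y z, ρ x y → ρ y z → ρ x z)
    (a : X) (hcomp : ∀ x, ρ x a ∨ ρ a x) :
    ∃ σ : Set (X × X), (∀ p ∈ σ, ρ p.1 p.2) ∧
      ∀ (G : Type u) [Group G], IsGradingSet G ρ σ := by
  refine ⟨{p | ∃ x, x ≠ a ∧ p = if ρ x a then (x, a) else (a, x)}, ?_, ?_⟩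
  · rintro p ⟨x, hx, rfl⟩
    by_cases h : ρ x a
    · rw [if_pos h]; exact h
    · rw [if_neg h]; exact (hcomp x).resolve_left h
  · intro G _
    constructor
    · rintro p ⟨x, hx, rfl⟩
      by_cases h : ρ x a
      · rw [if_pos h]; exact h
      · rw [if_neg h]; exact (hcomp x).resolve_left h
    · intro φ
      set g : X → G := fun x =>
        if x = a then 1 else if ρ x a then φ (x, a) else (φ (a, x))⁻¹ with hg
      refine ⟨fun x y => g x * (g y)⁻¹, ?_, ?_, ?_⟩
      · intro x y z _ _ _; group
      · rintro p ⟨x, hx, rfl⟩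
        by_cases h : ρ x a
        · rw [if_pos h]
          show g x * (g a)⁻¹ = φ (x, a)
          rw [hg]; simp [hx, h]
        · rw [if_neg h]
          show g a * (g x)⁻¹ = φ (a, x)
          rw [hg]; simp [hx, h]
      · intro Ψ hΨ hσ x y hxy
        have key : ∀ z : X, (if ρ z a then Ψ z a else (Ψ a z)⁻¹) = g z := by
          intro z
          by_cases hz : z = a
          · rw [hz, if_pos (hrefl a), relHom_diag hΨ (hrefl a), hg]; simp
          · by_cases h : ρ z a
            · have hm : ((z, a) : X × X) ∈
                  {p : X × X | ∃ x, x ≠ a ∧ p = if ρ x a then (x, a) else (a, x)} :=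
                ⟨z, hz, by rw [if_pos h]⟩
              have := hσ _ hm
              rw [if_pos h]
              rw [hg]; simp only [if_neg hz, if_pos h]
              exact this
            · have hm : ((a, z) : X × X) ∈
                  {p : X × X | ∃ x, x ≠ a ∧ p = if ρ x a then (x, a) else (a, x)} :=
                ⟨z, hz, by rw [if_neg h]⟩
              have := hσ _ hm
              rw [if_neg h]
              rw [hg]; simp only [if_neg hz, if_neg h]
              exact congrArg (·⁻¹) this
        have := relHom_pot hrefl htrans hΨ a (hcomp x) (hcomp y) hxy
        rw [key x, key y] at this
        exact this

section CaseTwo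

variable {X : Type v} (ρ : X → X → Prop) (a b : X)

def ccXa (c : X) (x : X) : Prop := ρ x c ∨ ρ c x

def ccD (x : X) : Prop := ccXa ρ a x ∧ ccXa ρ b x

def ccR (x y : X) : Prop := ccD ρ a b x ∧ ccD ρ a b y ∧ (ρ x y ∨ ρ y x)

noncomputable def ccRep (x : X) : X :=
  (Quotient.mk (Relation.EqvGen.setoid (ccR ρ a b)) x).out

noncomputable def ccEdge (c : X) (x : X) : X × X :=
  if ρ x c then (x, c) else (c, x)

lemma ccRep_eqv (x : X) : Relation.EqvGen (ccR ρ a b) (ccRep ρ a b x) x :=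
  @Quotient.mk_out X (Relation.EqvGen.setoid (ccR ρ a b)) x

lemma ccRep_eq {x y : X} (h : Relation.EqvGen (ccR ρ a b) x y) :
    ccRep ρ a b x = ccRep ρ a b y := by
  unfold ccRep
  congr 1
  exact Quotient.sound h

lemma ccRep_idem (x : X) : ccRep ρ a b (ccRep ρ a b x) = ccRep ρ a b x :=
  ccRep_eq ρ a b (ccRep_eqv ρ a b x)

lemma ccEqv_D {x y : X} (h : Relation.EqvGen (ccR ρ a b) x y) :
    x = y ∨ (ccD ρ a b x ∧ ccD ρ a b y) := by
  induction h with
  | rel x y h => exact Or.inr ⟨h.1, h.2.1⟩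
  | refl x => exact Or.inl rfl
  | symm x y h ih =>
      rcases ih with rfl | ⟨h1, h2⟩
      · exact Or.inl rfl
      · exact Or.inr ⟨h2, h1⟩
  | trans x y z h1 h2 ih1 ih2 =>
      rcases ih1 with rfl | ⟨d1, d2⟩
      · exact ih2
      · rcases ih2 with rfl | ⟨d3, d4⟩
        · exact Or.inr ⟨d1, d2⟩
        · exact Or.inr ⟨d1, d4⟩

lemma ccRep_D {x : X} (hx : ccD ρ a b x) : ccD ρ a b (ccRep ρ a b x) := by
  rcases ccEqv_D ρ a b (ccRep_eqv ρ a b x) with h | h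
  · rwa [h]
  · exact h.1

lemma ccConst {G : Sort*} (f : X → G) (hf : ∀ x y, ccR ρ a b x y → f x = f y)
    {x y : X} (h : Relation.EqvGen (ccR ρ a b) x y) : f x = f y := by
  induction h with
  | rel x y h => exact hf _ _ h
  | refl x => rfl
  | symm _ _ _ ih => exact ih.symm
  | trans _ _ _ _ _ ih1 ih2 => exact ih1.trans ih2

variable {G : Type u} [Group G]

noncomputable def ccGa (φ : X × X → G) : X → G :=
  fun x => if x = a then 1 else if ρ x a then φ (x, a) else (φ (a, x))⁻¹

noncomputable def ccVb (φ : X × X → G) : X → G :=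
  fun y => if ρ y b then φ (y, b) else (φ (b, y))⁻¹

noncomputable def ccGb (φ : X × X → G) : X → G :=
  fun y => if ccD ρ a b y then
      ccGa ρ a φ y * (ccGa ρ a φ (ccRep ρ a b y))⁻¹ * ccVb ρ b φ (ccRep ρ a b y)
    else if y = b then 1 else ccVb ρ b φ y

noncomputable def ccPhi (φ : X × X → G) : X → X → G :=
  fun x y => if ccXa ρ a x ∧ ccXa ρ a y then ccGa ρ a φ x * (ccGa ρ a φ y)⁻¹
    else if ccXa ρ b x ∧ ccXa ρ b y then ccGb ρ a b φ x * (ccGb ρ a b φ y)⁻¹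
    else 1

variable (φ : X × X → G)

lemma ccGb_b (hnab : ¬ ρ a b) (hnba : ¬ ρ b a) : ccGb ρ a b φ b = 1 := by
  unfold ccGb
  rw [if_neg, if_pos rfl]
  rintro ⟨h | h, -⟩
  · exact hnba h
  · exact hnab h

lemma ccGb_D {y : X} (hy : ccD ρ a b y) :
    ccGb ρ a b φ y =
      ccGa ρ a φ y * (ccGa ρ a φ (ccRep ρ a b y))⁻¹ * ccVb ρ b φ (ccRep ρ a b y) := by
  unfold ccGb
  rw [if_pos hy]

lemma ccGb_rep {x : X} (hx : ccD ρ a b x) :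
    ccGb ρ a b φ (ccRep ρ a b x) = ccVb ρ b φ (ccRep ρ a b x) := by
  rw [ccGb_D ρ a b φ (ccRep_D ρ a b hx), ccRep_idem]
  group

lemma ccDdiff {x y : X} (hx : ccD ρ a b x) (hy : ccD ρ a b y)
    (h : ρ x y ∨ ρ y x) :
    ccGb ρ a b φ x * (ccGb ρ a b φ y)⁻¹ = ccGa ρ a φ x * (ccGa ρ a φ y)⁻¹ := by
  rw [ccGb_D ρ a b φ hx, ccGb_D ρ a b φ hy,
    ccRep_eq ρ a b (Relation.EqvGen.rel x y ⟨hx, hy, h⟩)]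
  group

lemma ccPhi_a {x y : X} (h1 : ccXa ρ a x) (h2 : ccXa ρ a y) :
    ccPhi ρ a b φ x y = ccGa ρ a φ x * (ccGa ρ a φ y)⁻¹ := by
  unfold ccPhi
  rw [if_pos ⟨h1, h2⟩]

lemma ccPhi_b {x y : X} (h1 : ¬ (ccXa ρ a x ∧ ccXa ρ a y))
    (h2 : ccXa ρ b x) (h3 : ccXa ρ b y) :
    ccPhi ρ a b φ x y = ccGb ρ a b φ x * (ccGb ρ a b φ y)⁻¹ := by
  unfold ccPhi
  rw [if_neg h1, if_pos ⟨h2, h3⟩]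

lemma ccPhi_diag {x : X} (h : ccXa ρ a x ∨ ccXa ρ b x) :
    ccPhi ρ a b φ x x = 1 := by
  rcases h with h | h
  · rw [ccPhi_a ρ a b φ h h]; group
  · by_cases h' : ccXa ρ a x
    · rw [ccPhi_a ρ a b φ h' h']; group
    · rw [ccPhi_b ρ a b φ (fun hc => h' hc.1) h h]; group

lemma ccPhi_isHom
    (hcomp : ∀ x, ccXa ρ a x ∨ ccXa ρ b x)
    (hedge : ∀ x y, ρ x y → x ≠ y →
      (ccXa ρ a x ∧ ccXa ρ a y) ∨ (ccXa ρ b x ∧ ccXa ρ b y)) :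
    IsRelHom ρ (ccPhi ρ a b φ) := by
  intro x y z hxy hyz hxz
  by_cases hxy' : x = y
  · rw [hxy'] at hxz ⊢
    rw [ccPhi_diag ρ a b φ (hcomp y), one_mul]
  by_cases hyz' : y = z
  · rw [← hyz'] at hxz ⊢
    rw [ccPhi_diag ρ a b φ (hcomp y), mul_one]
  by_cases hxz' : x = z
  · rw [← hxz'] at hyz ⊢
    rw [ccPhi_diag ρ a b φ (hcomp x)]
    rcases hedge x y hxy hxy' with ⟨h1, h2⟩ | ⟨h1, h2⟩
    · rw [ccPhi_a ρ a b φ h1 h2, ccPhi_a ρ a b φ h2 h1]; group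
    · by_cases h3 : ccXa ρ a x ∧ ccXa ρ a y
      · rw [ccPhi_a ρ a b φ h3.1 h3.2, ccPhi_a ρ a b φ h3.2 h3.1]; group
      · have h4 : ¬ (ccXa ρ a y ∧ ccXa ρ a x) := fun hc => h3 ⟨hc.2, hc.1⟩
        rw [ccPhi_b ρ a b φ h3 h1 h2, ccPhi_b ρ a b φ h4 h2 h1]; group
  have exy := hedge x y hxy hxy'
  have eyz := hedge y z hyz hyz'
  have exz := hedge x z hxz hxz'
  by_cases h1 : ccXa ρ a x ∧ ccXa ρ a y
  · by_cases h2 : ccXa ρ a y ∧ ccXa ρ a z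
    · rw [ccPhi_a ρ a b φ h1.1 h1.2, ccPhi_a ρ a b φ h2.1 h2.2,
        ccPhi_a ρ a b φ h1.1 h2.2]
      group
    · have hz : ¬ ccXa ρ a z := fun hz => h2 ⟨h1.2, hz⟩
      have hbyz : ccXa ρ b y ∧ ccXa ρ b z := eyz.resolve_left fun h => hz h.2
      have hbxz : ccXa ρ b x ∧ ccXa ρ b z := exz.resolve_left fun h => hz h.2
      rw [ccPhi_a ρ a b φ h1.1 h1.2, ccPhi_b ρ a b φ h2 hbyz.1 hbyz.2,
        ccPhi_b ρ a b φ (fun h => hz h.2) hbxz.1 hbxz.2]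
      have hd := ccDdiff ρ a b φ ⟨h1.1, hbxz.1⟩ ⟨h1.2, hbyz.1⟩ (Or.inl hxy)
      rw [← hd]; group
  · by_cases h2 : ccXa ρ a y ∧ ccXa ρ a z
    · have hax : ¬ ccXa ρ a x := fun hx => h1 ⟨hx, h2.1⟩
      have hbxy : ccXa ρ b x ∧ ccXa ρ b y := exy.resolve_left fun h => hax h.1
      have hbxz : ccXa ρ b x ∧ ccXa ρ b z := exz.resolve_left fun h => hax h.1
      rw [ccPhi_b ρ a b φ h1 hbxy.1 hbxy.2, ccPhi_a ρ a b φ h2.1 h2.2,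
        ccPhi_b ρ a b φ (fun h => hax h.1) hbxz.1 hbxz.2]
      have hd := ccDdiff ρ a b φ ⟨h2.1, hbxy.2⟩ ⟨h2.2, hbxz.2⟩ (Or.inl hyz)
      rw [← hd]; group
    · have hbxy : ccXa ρ b x ∧ ccXa ρ b y := exy.resolve_left h1
      have hbyz : ccXa ρ b y ∧ ccXa ρ b z := eyz.resolve_left h2
      rw [ccPhi_b ρ a b φ h1 hbxy.1 hbxy.2, ccPhi_b ρ a b φ h2 hbyz.1 hbyz.2]
      by_cases h3 : ccXa ρ a x ∧ ccXa ρ a z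
      · rw [ccPhi_a ρ a b φ h3.1 h3.2]
        have hd := ccDdiff ρ a b φ ⟨h3.1, hbxy.1⟩ ⟨h3.2, hbyz.2⟩ (Or.inl hxz)
        rw [← hd]; group
      · rw [ccPhi_b ρ a b φ h3 hbxy.1 hbyz.2]; group

end CaseTwo

lemma crosscut_case_two {X : Type v} (ρ : X → X → Prop)
    (hrefl : ∀ x, ρ x x) (htrans : ∀ x y z, ρ x y → ρ y z → ρ x z)
    (a b : X) (hnab : ¬ ρ a b) (hnba : ¬ ρ b a)
    (hcomp : ∀ x, ccXa ρ a x ∨ ccXa ρ b x)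
    (hedge : ∀ x y, ρ x y → x ≠ y →
      (ccXa ρ a x ∧ ccXa ρ a y) ∨ (ccXa ρ b x ∧ ccXa ρ b y)) :
    ∃ σ : Set (X × X), (∀ p ∈ σ, ρ p.1 p.2) ∧
      ∀ (G : Type u) [Group G], IsGradingSet G ρ σ := by
  classical
  have hnXab : ¬ ccXa ρ a b := by rintro (h | h); exacts [hnba h, hnab h]
  have hnXba : ¬ ccXa ρ b a := by rintro (h | h); exacts [hnab h, hnba h]
  have hXaa : ccXa ρ a a := Or.inl (hrefl a)
  have hXbb : ccXa ρ b b := Or.inl (hrefl b)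
  set σ : Set (X × X) :=
    {p | ∃ x, ccXa ρ a x ∧ x ≠ a ∧ p = ccEdge ρ a x} ∪
    {p | ∃ y, ccXa ρ b y ∧ ¬ ccXa ρ a y ∧ y ≠ b ∧ p = ccEdge ρ b y} ∪
    {p | ∃ x, ccD ρ a b x ∧ p = ccEdge ρ b (ccRep ρ a b x)} with hσdef
  have hedgeρ : ∀ c x, ccXa ρ c x → ρ (ccEdge ρ c x).1 (ccEdge ρ c x).2 := by
    intro c x hx
    unfold ccEdge
    by_cases h : ρ x c
    · rw [if_pos h]; exact h
    · rw [if_neg h]; exact hx.resolve_left h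
  have hσρ : ∀ p ∈ σ, ρ p.1 p.2 := by
    rintro p ((⟨x, hx, -, rfl⟩ | ⟨y, hy, -, -, rfl⟩) | ⟨x, hx, rfl⟩)
    · exact hedgeρ a x hx
    · exact hedgeρ b y hy
    · exact hedgeρ b _ (ccRep_D ρ a b hx).2
  refine ⟨σ, hσρ, ?_⟩
  intro G _
  refine ⟨hσρ, ?_⟩
  intro φ
  refine ⟨ccPhi ρ a b φ, ccPhi_isHom ρ a b φ hcomp hedge, ?_, ?_⟩
  · -- restriction to σ
    rintro p ((⟨x, hx, hxa, rfl⟩ | ⟨y, hy, hyna, hyb, rfl⟩) | ⟨x, hx, rfl⟩)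
    · unfold ccEdge
      by_cases h : ρ x a
      · rw [if_pos h]
        show ccPhi ρ a b φ x a = φ (x, a)
        rw [ccPhi_a ρ a b φ hx hXaa]
        unfold ccGa
        rw [if_pos rfl, if_neg hxa, if_pos h]
        group
      · rw [if_neg h]
        show ccPhi ρ a b φ a x = φ (a, x)
        rw [ccPhi_a ρ a b φ hXaa hx]
        unfold ccGa
        rw [if_pos rfl, if_neg hxa, if_neg h]
        group
    · unfold ccEdge
      have hgb : ccGb ρ a b φ y = ccVb ρ b φ y := by
        unfold ccGb
        rw [if_neg (fun hc => hyna hc.1), if_neg hyb]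
      by_cases h : ρ y b
      · rw [if_pos h]
        show ccPhi ρ a b φ y b = φ (y, b)
        rw [ccPhi_b ρ a b φ (fun hc => hyna hc.1) hy hXbb,
          ccGb_b ρ a b φ hnab hnba, hgb]
        unfold ccVb
        rw [if_pos h]
        group
      · rw [if_neg h]
        show ccPhi ρ a b φ b y = φ (b, y)
        rw [ccPhi_b ρ a b φ (fun hc => hnXab hc.1) hXbb hy,
          ccGb_b ρ a b φ hnab hnba, hgb]
        unfold ccVb
        rw [if_neg h]
        group
    · set r := ccRep ρ a b x with hr
      have hrD : ccD ρ a b r := ccRep_D ρ a b hx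
      have hgb : ccGb ρ a b φ r = ccVb ρ b φ r := ccGb_rep ρ a b φ hx
      unfold ccEdge
      by_cases h : ρ r b
      · rw [if_pos h]
        show ccPhi ρ a b φ r b = φ (r, b)
        rw [ccPhi_b ρ a b φ (fun hc => hnXab hc.2) hrD.2 hXbb,
          ccGb_b ρ a b φ hnab hnba, hgb]
        unfold ccVb
        rw [if_pos h]
        group
      · rw [if_neg h]
        show ccPhi ρ a b φ b r = φ (b, r)
        rw [ccPhi_b ρ a b φ (fun hc => hnXab hc.1) hXbb hrD.2,
          ccGb_b ρ a b φ hnab hnba, hgb]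
        unfold ccVb
        rw [if_neg h]
        group
  · -- uniqueness
    intro Ψ hΨ hσ
    have hFa : ∀ x, ccXa ρ a x →
        (if ρ x a then Ψ x a else (Ψ a x)⁻¹) = ccGa ρ a φ x := by
      intro x hx
      by_cases hxa : x = a
      · rw [hxa, if_pos (hrefl a), relHom_diag hΨ (hrefl a)]
        unfold ccGa
        rw [if_pos rfl]
      · have hm : ccEdge ρ a x ∈ σ :=
          Or.inl (Or.inl ⟨x, hx, hxa, rfl⟩)
        have hval := hσ _ hm
        unfold ccGa
        rw [if_neg hxa]
        unfold ccEdge at hval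
        by_cases h : ρ x a
        · simp only [if_pos h] at hval ⊢
          exact hval
        · simp only [if_neg h] at hval ⊢
          exact congrArg (·⁻¹) hval
    have hFbσ2 : ∀ y, ccXa ρ b y → ¬ ccXa ρ a y → y ≠ b →
        (if ρ y b then Ψ y b else (Ψ b y)⁻¹) = ccVb ρ b φ y := by
      intro y hy hyna hyb
      have hm : ccEdge ρ b y ∈ σ := Or.inl (Or.inr ⟨y, hy, hyna, hyb, rfl⟩)
      have hval := hσ _ hm
      unfold ccVb
      unfold ccEdge at hval
      by_cases h : ρ y b
      · simp only [if_pos h] at hval ⊢; exact hval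
      · simp only [if_neg h] at hval ⊢; exact congrArg (·⁻¹) hval
    have hFbσ3 : ∀ x, ccD ρ a b x →
        (if ρ (ccRep ρ a b x) b then Ψ (ccRep ρ a b x) b else (Ψ b (ccRep ρ a b x))⁻¹)
          = ccVb ρ b φ (ccRep ρ a b x) := by
      intro x hx
      have hm : ccEdge ρ b (ccRep ρ a b x) ∈ σ := Or.inr ⟨x, hx, rfl⟩
      have hval := hσ _ hm
      unfold ccVb
      unfold ccEdge at hval
      by_cases h : ρ (ccRep ρ a b x) b
      · simp only [if_pos h] at hval ⊢; exact hval
      · simp only [if_neg h] at hval ⊢; exact congrArg (·⁻¹) hval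
    have hstep : ∀ x y, ccR ρ a b x y →
        (if ρ x a then Ψ x a else (Ψ a x)⁻¹)⁻¹ * (if ρ x b then Ψ x b else (Ψ b x)⁻¹)
        = (if ρ y a then Ψ y a else (Ψ a y)⁻¹)⁻¹ *
          (if ρ y b then Ψ y b else (Ψ b y)⁻¹) := by
      rintro x y ⟨hx, hy, h | h⟩
      · exact grp_aux ((relHom_pot hrefl htrans hΨ a hx.1 hy.1 h).symm.trans
          (relHom_pot hrefl htrans hΨ b hx.2 hy.2 h))
      · exact (grp_aux ((relHom_pot hrefl htrans hΨ a hy.1 hx.1 h).symm.trans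
          (relHom_pot hrefl htrans hΨ b hy.2 hx.2 h))).symm
    have hFb : ∀ y, ccXa ρ b y →
        (if ρ y b then Ψ y b else (Ψ b y)⁻¹) = ccGb ρ a b φ y := by
      intro y hy
      by_cases hyD : ccD ρ a b y
      · have hc := ccConst ρ a b
          (fun z => (if ρ z a then Ψ z a else (Ψ a z)⁻¹)⁻¹ *
            (if ρ z b then Ψ z b else (Ψ b z)⁻¹))
          hstep (Relation.EqvGen.symm _ _ (ccRep_eqv ρ a b y))
        beta_reduce at hc
        have hrD := ccRep_D ρ a b hyD
        have key : (if ρ y b then Ψ y b else (Ψ b y)⁻¹) =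
            (if ρ y a then Ψ y a else (Ψ a y)⁻¹) *
            ((if ρ (ccRep ρ a b y) a then Ψ (ccRep ρ a b y) a
                else (Ψ a (ccRep ρ a b y))⁻¹)⁻¹ *
              (if ρ (ccRep ρ a b y) b then Ψ (ccRep ρ a b y) b
                else (Ψ b (ccRep ρ a b y))⁻¹)) := by
          rw [← hc]; group
        rw [key, hFa y hyD.1, hFa _ hrD.1, hFbσ3 y hyD, ccGb_D ρ a b φ hyD]
        group
      · by_cases hyb : y = b
        · rw [hyb, if_pos (hrefl b), relHom_diag hΨ (hrefl b),
            ccGb_b ρ a b φ hnab hnba]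
        · have hyna : ¬ ccXa ρ a y := fun hc => hyD ⟨hc, hy⟩
          rw [hFbσ2 y hy hyna hyb]
          unfold ccGb
          rw [if_neg hyD, if_neg hyb]
    intro x y hxy
    by_cases hxy' : x = y
    · rw [hxy', relHom_diag hΨ (hrefl y), ccPhi_diag ρ a b φ (hcomp y)]
    · by_cases h1 : ccXa ρ a x ∧ ccXa ρ a y
      · rw [ccPhi_a ρ a b φ h1.1 h1.2,
          relHom_pot hrefl htrans hΨ a h1.1 h1.2 hxy, hFa x h1.1, hFa y h1.2]
      · have h2 : ccXa ρ b x ∧ ccXa ρ b y := (hedge x y hxy hxy').resolve_left h1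
        rw [ccPhi_b ρ a b φ h1 h2.1 h2.2,
          relHom_pot hrefl htrans hΨ b h2.1 h2.2 hxy, hFb x h2.1, hFb y h2.2]

/-- a preorder with a cross-cut of length one or two has a
subset `σ ⊆ ρ` which is a `G`-grading set for every group `G`. -/
theorem preorder_crosscut_gradingSet {X : Type v} (ρ : X → X → Prop)
    (hrefl : ∀ x, ρ x x) (htrans : ∀ a b c, ρ a b → ρ b c → ρ a c)
    (A : Set X) (hA : IsCrossCut ρ A) (hcard : A.ncard = 1 ∨ A.ncard = 2) :
    ∃ σ : Set (X × X), (∀ p ∈ σ, ρ p.1 p.2) ∧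
      ∀ (G : Type u) [Group G], IsGradingSet G ρ σ := by
  rcases hcard with h1 | h2
  · obtain ⟨a, rfl⟩ := Set.ncard_eq_one.mp h1
    apply crosscut_case_one ρ hrefl htrans a
    intro x
    obtain ⟨c, hc, h⟩ := hA.2.1 x
    rw [Set.mem_singleton_iff] at hc
    subst hc; exact h
  · obtain ⟨a, b, hab, rfl⟩ := Set.ncard_eq_two.mp h2
    have ha : a ∈ ({a, b} : Set X) := Or.inl rfl
    have hb : b ∈ ({a, b} : Set X) := Or.inr rfl
    obtain ⟨hnab, hnba⟩ := hA.1 a ha b hb hab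
    have hcomp : ∀ x, ccXa ρ a x ∨ ccXa ρ b x := by
      intro x
      obtain ⟨c, hc, h⟩ := hA.2.1 x
      rcases hc with rfl | hc
      · exact Or.inl h
      · rw [Set.mem_singleton_iff] at hc; subst hc; exact Or.inr h
    have hedge : ∀ x y, ρ x y → x ≠ y →
        (ccXa ρ a x ∧ ccXa ρ a y) ∨ (ccXa ρ b x ∧ ccXa ρ b y) := by
      intro x y hxy hne
      have hch : IsChain ρ ({x, y} : Set X) := by
        rintro u (rfl | hu) v (rfl | hv) huv
        · exact absurd rfl huv
        · rw [Set.mem_singleton_iff] at hv; subst hv; exact Or.inl hxy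
        · rw [Set.mem_singleton_iff] at hu; subst hu; exact Or.inr hxy
        · rw [Set.mem_singleton_iff] at hu hv; subst hu; subst hv
          exact absurd rfl huv
      obtain ⟨C', hsub, hchain, c, hcA, hcC⟩ := hA.2.2 {x, y} hch
      have hxC : x ∈ C' := hsub (Or.inl rfl)
      have hyC : y ∈ C' := hsub (Or.inr rfl)
      have key : ∀ z ∈ C', ccXa ρ c z := by
        intro z hz
        by_cases hzc : z = c
        · rw [hzc]; exact Or.inl (hrefl c)
        · exact hchain hz hcC hzc
      rcases hcA with rfl | hcb
      · exact Or.inl ⟨key x hxC, key y hyC⟩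
      · rw [Set.mem_singleton_iff] at hcb; subst hcb
        exact Or.inr ⟨key x hxC, key y hyC⟩
    exact crosscut_case_two ρ hrefl htrans a b hnab hnba hcomp hedge
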